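/- Let α be a well order and let s_l, s_r, t_l, t_r be finite sequences over α such that t_r is empty or begins with an element strictly below all elements of s_l. Then s_l * s_r ≤_s t_l * t_r implies s_l ≤_s t_l. -/

import Mathlib

/-- The weak gap condition on finite sequences over a linear order. -/
def WeakGap {α : Type*} [LinearOrder α] (s t : List α) : Prop :=
  ∃ f : Fin s.length → Fin t.length,
    StrictMono f ∧
    (∀ i, s.get i ≤ t.get (f i)) ∧
    ∀ (i : ℕ) (h : i + 1 < s.length) (j : Fin t.length),
      f ⟨i, Nat.lt_of_succ_lt h⟩ < j → j < f ⟨i + 1, h⟩ → s.get ⟨i + 1, h⟩ ≤ t.get j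

/-- The strong gap condition on finite sequences over a linear order:
as the weak one, but additionally respecting the outer gap. -/
def StrongGap {α : Type*} [LinearOrder α] (s t : List α) : Prop :=
  ∃ f : Fin s.length → Fin t.length,
    StrictMono f ∧
    (∀ i, s.get i ≤ t.get (f i)) ∧
    (∀ (i : ℕ) (h : i + 1 < s.length) (j : Fin t.length),
      f ⟨i, Nat.lt_of_succ_lt h⟩ < j → j < f ⟨i + 1, h⟩ → s.get ⟨i + 1, h⟩ ≤ t.get j) ∧
    ∀ (h : 0 < s.length) (j : Fin t.length), j < f ⟨0, h⟩ → s.get ⟨0, h⟩ ≤ t.get j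

/-- Removing the tails of a strong gap relation. -/
theorem strongGap_remove_tail {α : Type*} [LinearOrder α] [WellFoundedLT α]
    (sl sr tl tr : List α)
    (hhead : ∀ a, tr.head? = some a → ∀ b ∈ sl, a < b) :
    StrongGap (sl ++ sr) (tl ++ tr) → StrongGap sl tl := by
  rintro ⟨f, hmono, hle, hgap, houter⟩
  have hsl : sl.length ≤ (sl ++ sr).length := by simp
  have htl : tl.length ≤ (tl ++ tr).length := by simp
  -- t.get at position tl.length is tr.head, which is below every element of sl
  have hhd : ∀ (h : tl.length < (tl ++ tr).length) (b : α), b ∈ sl →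
      (tl ++ tr).get ⟨tl.length, h⟩ < b := by
    intro h b hb
    have htr : tr ≠ [] := by
      intro he; simp [he] at h
    have hget : (tl ++ tr).get ⟨tl.length, h⟩ = tr.head htr := by
      simp [List.getElem_append_right (Nat.le_refl tl.length),
        List.getElem_zero]
    rw [hget]
    exact hhead _ (List.head?_eq_head htr) b hb
  have key : ∀ (m : ℕ) (hm : m < sl.length),
      (f ⟨m, lt_of_lt_of_le hm hsl⟩).val < tl.length := by
    intro m
    induction m with
    | zero =>
      intro hm
      by_contra hc
      push_neg at hc
      set i0 : Fin (sl ++ sr).length := ⟨0, lt_of_lt_of_le hm hsl⟩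
      have hjt : tl.length < (tl ++ tr).length := lt_of_le_of_lt hc (f i0).isLt
      set jt : Fin (tl ++ tr).length := ⟨tl.length, hjt⟩
      have hmem : (sl ++ sr).get i0 ∈ sl := by
        have : (sl ++ sr).get i0 = sl[0] := by
          simp [i0, List.getElem_append_left hm]
        rw [this]; exact List.getElem_mem _
      have hlt : (tl ++ tr).get jt < (sl ++ sr).get i0 := hhd hjt _ hmem
      rcases lt_or_eq_of_le (show jt ≤ f i0 from hc) with h | h
      · exact absurd (houter (lt_of_lt_of_le hm hsl) jt h) (not_le.2 hlt)
      · have := hle i0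
        rw [← h] at this
        exact absurd this (not_le.2 hlt)
    | succ k ih =>
      intro hm
      have hk : k < sl.length := Nat.lt_of_succ_lt hm
      by_contra hc
      push_neg at hc
      have hm' : k + 1 < (sl ++ sr).length := lt_of_lt_of_le hm hsl
      set i1 : Fin (sl ++ sr).length := ⟨k + 1, hm'⟩
      have hjt : tl.length < (tl ++ tr).length := lt_of_le_of_lt hc (f i1).isLt
      set jt : Fin (tl ++ tr).length := ⟨tl.length, hjt⟩
      have hmem : (sl ++ sr).get i1 ∈ sl := by
        have : (sl ++ sr).get i1 = sl[k + 1] := by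
          simp [i1, List.getElem_append_left hm]
        rw [this]; exact List.getElem_mem _
      have hlt : (tl ++ tr).get jt < (sl ++ sr).get i1 := hhd hjt _ hmem
      have hfk : (f ⟨k, Nat.lt_of_succ_lt hm'⟩).val < tl.length := ih hk
      rcases lt_or_eq_of_le (show jt ≤ f i1 from hc) with h | h
      · exact absurd (hgap k hm' jt (by exact hfk) h) (not_le.2 hlt)
      · have := hle i1
        rw [← h] at this
        exact absurd this (not_le.2 hlt)
  -- construct the restricted embedding
  refine ⟨fun i => ⟨(f ⟨i.val, lt_of_lt_of_le i.isLt hsl⟩).val, key i.val i.isLt⟩,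
    ?_, ?_, ?_, ?_⟩
  · intro i j hij
    exact hmono (show (⟨i.val, _⟩ : Fin (sl ++ sr).length) < ⟨j.val, _⟩ from hij)
  · intro i
    have h1 : (sl ++ sr).get ⟨i.val, lt_of_lt_of_le i.isLt hsl⟩ = sl.get i := by
      simp [List.getElem_append_left i.isLt]
    have h2 : (tl ++ tr).get (f ⟨i.val, lt_of_lt_of_le i.isLt hsl⟩) =
        tl.get ⟨_, key i.val i.isLt⟩ := by
      simp [List.getElem_append_left (key i.val i.isLt)]
    rw [← h1, ← h2]
    exact hle _
  · intro i h j h1 h2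
    have h' : i + 1 < (sl ++ sr).length := lt_of_lt_of_le h hsl
    set j' : Fin (tl ++ tr).length := ⟨j.val, lt_of_lt_of_le j.isLt htl⟩
    have := hgap i h' j' (show (f ⟨i, _⟩).val < j.val from h1)
      (show j.val < (f ⟨i + 1, h'⟩).val from h2)
    have e1 : (sl ++ sr).get ⟨i + 1, h'⟩ = sl.get ⟨i + 1, h⟩ := by
      simp [List.getElem_append_left h]
    have e2 : (tl ++ tr).get j' = tl.get j := by
      simp [j', List.getElem_append_left j.isLt]
    rwa [e1, e2] at this
  · intro h j hj
    have h' : 0 < (sl ++ sr).length := lt_of_lt_of_le h hsl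
    set j' : Fin (tl ++ tr).length := ⟨j.val, lt_of_lt_of_le j.isLt htl⟩
    have := houter h' j' (show j.val < (f ⟨0, h'⟩).val from hj)
    have e1 : (sl ++ sr).get ⟨0, h'⟩ = sl.get ⟨0, h⟩ := by
      simp [List.getElem_append_left h]
    have e2 : (tl ++ tr).get j' = tl.get j := by
      simp [j', List.getElem_append_left j.isLt]
    rwa [e1, e2] at this
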